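/- For any τ > 0 and Z ∈ ℝ^{m×n} with SVD Z = U diag(σ) V^⊤, the matrix S_τ(Z) := U diag((σ − τ)₊) V^⊤ is the unique minimizer of L ↦ ‖L‖_* + (1/(2τ))‖L − Z‖_F². -/

import Mathlib

noncomputable def nuclearNorm {m n : ℕ} (A : Matrix (Fin m) (Fin n) ℝ) : ℝ :=
  ∑ i, Real.sqrt ((show (A.transpose * A).IsHermitian by
    simpa [Matrix.conjTranspose_eq_transpose_of_trivial] using
      Matrix.isHermitian_conjTranspose_mul_self A).eigenvalues i)

noncomputable def frobSq {m n : ℕ} (A : Matrix (Fin m) (Fin n) ℝ) : ℝ := ∑ i, ∑ j, (A i j)^2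

open Matrix Finset

section helpers

lemma ct_eq {a b : ℕ} (A : Matrix (Fin a) (Fin b) ℝ) : Aᴴ = Aᵀ :=
  Matrix.conjTranspose_eq_transpose_of_trivial A

lemma dot_mulVec_mulVec {a b : ℕ} (W L : Matrix (Fin a) (Fin b) ℝ) (x y : Fin b → ℝ) :
    (W *ᵥ x) ⬝ᵥ (L *ᵥ y) = x ⬝ᵥ ((Wᵀ * L) *ᵥ y) := by
  symm; rw [← mulVec_mulVec, dotProduct_mulVec, vecMul_transpose]

lemma dot_diag {p : ℕ} (e : Fin p → ℝ) (y : Fin p → ℝ) :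
    y ⬝ᵥ (Matrix.diagonal e *ᵥ y) = ∑ i, e i * (y i)^2 := by
  simp [dotProduct, mulVec_diagonal]
  exact Finset.sum_congr rfl fun i _ => by ring

lemma dot_self_nonneg {p : ℕ} (x : Fin p → ℝ) : 0 ≤ x ⬝ᵥ x :=
  Finset.sum_nonneg fun i _ => mul_self_nonneg _

-- columns orthonormal → Vᵀ shrinks norm
lemma colorth {a b : ℕ} (V : Matrix (Fin a) (Fin b) ℝ) (hV : Vᵀ * V = 1) (x : Fin a → ℝ) :
    (Vᵀ *ᵥ x) ⬝ᵥ (Vᵀ *ᵥ x) ≤ x ⬝ᵥ x := by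
  have h1 : (Vᵀ *ᵥ x) ⬝ᵥ (Vᵀ *ᵥ x) = x ⬝ᵥ ((V * Vᵀ) *ᵥ x) := by
    rw [dot_mulVec_mulVec, transpose_transpose]
  set P : Matrix (Fin a) (Fin a) ℝ := V * Vᵀ with hP
  have hPt : Pᵀ = P := by rw [hP, transpose_mul, transpose_transpose]
  have hPP : P * P = P := by
    rw [hP, Matrix.mul_assoc, ← Matrix.mul_assoc Vᵀ, hV, Matrix.one_mul]
  have key : (x - P *ᵥ x) ⬝ᵥ (x - P *ᵥ x) = x ⬝ᵥ x - x ⬝ᵥ (P *ᵥ x) := by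
    have c1 : (P *ᵥ x) ⬝ᵥ (P *ᵥ x) = x ⬝ᵥ (P *ᵥ x) := by
      rw [dot_mulVec_mulVec, hPt, hPP]
    have c2 : (P *ᵥ x) ⬝ᵥ x = x ⬝ᵥ (P *ᵥ x) := dotProduct_comm _ _
    simp only [dotProduct_sub, sub_dotProduct, c1, c2]; ring
  have := dot_self_nonneg (x - P *ᵥ x)
  rw [key] at this; rw [h1]; linarith

-- Cauchy–Schwarz for dotProduct
lemma dot_le_sqrt {p : ℕ} (f g : Fin p → ℝ) :
    f ⬝ᵥ g ≤ Real.sqrt (f ⬝ᵥ f) * Real.sqrt (g ⬝ᵥ g) := by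
  have h := Finset.sum_mul_sq_le_sq_mul_sq Finset.univ f g
  have h1 : f ⬝ᵥ g ≤ |f ⬝ᵥ g| := le_abs_self _
  have h2 : |f ⬝ᵥ g| = Real.sqrt ((f ⬝ᵥ g)^2) := by
    rw [Real.sqrt_sq_eq_abs]
  have h3 : Real.sqrt ((f ⬝ᵥ g)^2) ≤ Real.sqrt ((∑ i, f i ^ 2) * (∑ i, g i ^ 2)) := by
    apply Real.sqrt_le_sqrt
    simpa [dotProduct] using h
  have h4 : f ⬝ᵥ f = ∑ i, f i ^ 2 := by simp [dotProduct, pow_two]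
  have h5 : g ⬝ᵥ g = ∑ i, g i ^ 2 := by simp [dotProduct, pow_two]
  calc f ⬝ᵥ g ≤ Real.sqrt ((∑ i, f i ^ 2) * (∑ i, g i ^ 2)) := by
        rw [h2] at h1; exact h1.trans h3
    _ = Real.sqrt (f ⬝ᵥ f) * Real.sqrt (g ⬝ᵥ g) := by
        rw [h4, h5, Real.sqrt_mul (Finset.sum_nonneg fun i _ => sq_nonneg _)]

lemma quad_le {a b : ℕ} (B : Matrix (Fin a) (Fin b) ℝ) (hB : Bᵀ * B = 1)
    (e : Fin b → ℝ) (he : ∀ i, e i ≤ 1) (x : Fin a → ℝ) :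
    x ⬝ᵥ ((B * Matrix.diagonal e * Bᵀ) *ᵥ x) ≤ x ⬝ᵥ x := by
  have h1 : (B * Matrix.diagonal e * Bᵀ) *ᵥ x = B *ᵥ (Matrix.diagonal e *ᵥ (Bᵀ *ᵥ x)) := by
    rw [← mulVec_mulVec, ← mulVec_mulVec]
  have h2 : x ⬝ᵥ (B *ᵥ (Matrix.diagonal e *ᵥ (Bᵀ *ᵥ x)))
      = (Bᵀ *ᵥ x) ⬝ᵥ (Matrix.diagonal e *ᵥ (Bᵀ *ᵥ x)) := by
    rw [dotProduct_mulVec, ← mulVec_transpose]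
  rw [h1, h2, dot_diag]
  calc ∑ i, e i * (Bᵀ *ᵥ x) i ^ 2 ≤ ∑ i, (Bᵀ *ᵥ x) i ^ 2 := by
        apply Finset.sum_le_sum; intro i _
        exact mul_le_of_le_one_left (sq_nonneg _) (he i)
    _ = (Bᵀ *ᵥ x) ⬝ᵥ (Bᵀ *ᵥ x) := by simp [dotProduct, pow_two]
    _ ≤ x ⬝ᵥ x := colorth B hB x

-- W = A diag(e) Bᵀ with orthonormal columns and |e| ≤ 1 is a contraction
lemma opbound {a b c : ℕ} (A : Matrix (Fin a) (Fin c) ℝ) (B : Matrix (Fin b) (Fin c) ℝ)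
    (e : Fin c → ℝ) (hA : Aᵀ * A = 1) (hB : Bᵀ * B = 1) (he : ∀ i, e i ^ 2 ≤ 1)
    (x : Fin b → ℝ) :
    ((A * Matrix.diagonal e * Bᵀ) *ᵥ x) ⬝ᵥ ((A * Matrix.diagonal e * Bᵀ) *ᵥ x) ≤ x ⬝ᵥ x := by
  set W := A * Matrix.diagonal e * Bᵀ with hW
  have hWtW : Wᵀ * W = B * Matrix.diagonal (fun i => e i ^ 2) * Bᵀ := by
    rw [hW, transpose_mul, transpose_mul, transpose_transpose, diagonal_transpose]
    calc Bᵀᵀ * (Matrix.diagonal e * Aᵀ) * (A * Matrix.diagonal e * Bᵀ)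
        = B * (Matrix.diagonal e * ((Aᵀ * A) * Matrix.diagonal e)) * Bᵀ := by
          rw [transpose_transpose]
          simp only [Matrix.mul_assoc]
    _ = B * Matrix.diagonal (fun i => e i ^ 2) * Bᵀ := by
          rw [hA, Matrix.one_mul, diagonal_mul_diagonal]
          simp only [Matrix.mul_assoc, pow_two]
  rw [dot_mulVec_mulVec, hWtW]
  exact quad_le B hB _ he x

lemma diag_entry {a b c : ℕ} (A : Matrix (Fin a) (Fin b) ℝ) (M : Matrix (Fin a) (Fin c) ℝ)
    (C : Matrix (Fin c) (Fin b) ℝ) (j : Fin b) :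
    (Aᵀ * M * C) j j = (fun k => A k j) ⬝ᵥ (M *ᵥ fun k => C k j) := by
  simp only [Matrix.mul_apply, Matrix.transpose_apply, Matrix.mulVec, dotProduct,
    Finset.sum_mul, Finset.mul_sum]
  rw [Finset.sum_comm]
  exact Finset.sum_congr rfl fun i _ => Finset.sum_congr rfl fun k _ => by ring

lemma sum_ip {a b : ℕ} (A B : Matrix (Fin a) (Fin b) ℝ) :
    ∑ i, ∑ j, A i j * B i j = (Aᵀ * B).trace := by
  rw [Matrix.trace]
  simp only [Matrix.diag_apply, Matrix.mul_apply, Matrix.transpose_apply]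
  rw [Finset.sum_comm]

lemma frobSq_eq_trace {a b : ℕ} (A : Matrix (Fin a) (Fin b) ℝ) :
    frobSq A = (Aᵀ * A).trace := by
  rw [frobSq, ← sum_ip]
  exact Finset.sum_congr rfl fun i _ => Finset.sum_congr rfl fun j _ => (pow_two _)

lemma frobSq_add {a b : ℕ} (X Y : Matrix (Fin a) (Fin b) ℝ) :
    frobSq (X + Y) = frobSq X + 2 * (Xᵀ * Y).trace + frobSq Y := by
  rw [← sum_ip]
  simp only [frobSq, Matrix.add_apply, ← Finset.sum_add_distrib, Finset.mul_sum]
  exact Finset.sum_congr rfl fun i _ =>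
    Finset.sum_congr rfl fun j _ => by ring

lemma frobSq_nonneg {a b : ℕ} (A : Matrix (Fin a) (Fin b) ℝ) : 0 ≤ frobSq A :=
  Finset.sum_nonneg fun i _ => Finset.sum_nonneg fun j _ => sq_nonneg _

lemma trace_UDVt_mul {a b c : ℕ} (U : Matrix (Fin a) (Fin c) ℝ) (V : Matrix (Fin b) (Fin c) ℝ)
    (hU : Uᵀ * U = 1) (f g : Fin c → ℝ) :
    ((U * Matrix.diagonal f * Vᵀ)ᵀ * (U * Matrix.diagonal g * Vᵀ)).trace
      = ∑ i, f i * g i * (Vᵀ * V) i i := by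
  have h : (U * Matrix.diagonal f * Vᵀ)ᵀ * (U * Matrix.diagonal g * Vᵀ)
      = V * (Matrix.diagonal (fun i => f i * g i)) * Vᵀ := by
    rw [transpose_mul, transpose_mul, transpose_transpose, diagonal_transpose]
    calc V * (Matrix.diagonal f * Uᵀ) * (U * Matrix.diagonal g * Vᵀ)
        = V * (Matrix.diagonal f * ((Uᵀ * U) * Matrix.diagonal g)) * Vᵀ := by
          simp only [Matrix.mul_assoc]
    _ = V * Matrix.diagonal (fun i => f i * g i) * Vᵀ := by
          rw [hU, Matrix.one_mul, diagonal_mul_diagonal]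
  rw [h, Matrix.trace_mul_comm, ← Matrix.mul_assoc]
  rw [Matrix.trace]
  simp only [Matrix.diag_apply, Matrix.mul_diagonal]
  exact Finset.sum_congr rfl fun i _ => by ring

end helpers

section spectral
variable {a b : ℕ} (L : Matrix (Fin a) (Fin b) ℝ)

lemma dual_le (W : Matrix (Fin a) (Fin b) ℝ)
    (hW : ∀ x, (W *ᵥ x) ⬝ᵥ (W *ᵥ x) ≤ x ⬝ᵥ x) :
    (Wᵀ * L).trace ≤ nuclearNorm L := by
  have hH : (Lᵀ * L).IsHermitian := by
    simpa [Matrix.conjTranspose_eq_transpose_of_trivial] using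
      Matrix.isHermitian_conjTranspose_mul_self L
  set Q : Matrix (Fin b) (Fin b) ℝ := (hH.eigenvectorUnitary : Matrix (Fin b) (Fin b) ℝ) with hQ
  set lam : Fin b → ℝ := hH.eigenvalues with hlam
  have h1 : Qᵀ * Q = 1 := by
    have := (hH.eigenvectorUnitary).2
    rw [Matrix.mem_unitaryGroup_iff'] at this
    simpa [Matrix.star_eq_conjTranspose, Matrix.conjTranspose_eq_transpose_of_trivial] using this
  have h2 : Q * Qᵀ = 1 := by
    have := (hH.eigenvectorUnitary).2
    rw [Matrix.mem_unitaryGroup_iff] at this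
    simpa [Matrix.star_eq_conjTranspose, Matrix.conjTranspose_eq_transpose_of_trivial] using this
  have hspec : Lᵀ * L = Q * Matrix.diagonal lam * Qᵀ := by
    rw [← Matrix.conjTranspose_eq_transpose_of_trivial L]
    have := hH.spectral_theorem
    simpa [Matrix.star_eq_conjTranspose, Matrix.conjTranspose_eq_transpose_of_trivial] using this
  have hdiag : Qᵀ * (Lᵀ * L) * Q = Matrix.diagonal lam := by
    rw [hspec]
    calc Qᵀ * (Q * Matrix.diagonal lam * Qᵀ) * Q
        = (Qᵀ * Q) * Matrix.diagonal lam * (Qᵀ * Q) := by simp only [Matrix.mul_assoc]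
    _ = Matrix.diagonal lam := by rw [h1, Matrix.one_mul, Matrix.mul_one]
  have key : (Wᵀ * L).trace = ∑ i, (fun k => Q k i) ⬝ᵥ ((Wᵀ * L) *ᵥ fun k => Q k i) := by
    calc (Wᵀ * L).trace = ((Wᵀ * L) * (Q * Qᵀ)).trace := by rw [h2, Matrix.mul_one]
    _ = (Qᵀ * ((Wᵀ * L) * Q)).trace := by
        rw [← Matrix.mul_assoc, Matrix.trace_mul_comm]
    _ = ∑ i, (Qᵀ * (Wᵀ * L) * Q) i i := by
        rw [Matrix.trace, ← Matrix.mul_assoc]; rfl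
    _ = _ := Finset.sum_congr rfl fun i _ => diag_entry Q (Wᵀ * L) Q i
  rw [key, nuclearNorm]
  apply Finset.sum_le_sum
  intro i _
  set q : Fin b → ℝ := fun k => Q k i with hq
  have hqq : q ⬝ᵥ q = 1 := by
    have e1 : (Qᵀ * Q) i i = q ⬝ᵥ q := by
      have := diag_entry Q (1 : Matrix (Fin b) (Fin b) ℝ) Q i
      rw [Matrix.mul_one] at this
      rw [this, Matrix.one_mulVec]
    rw [← e1, h1, Matrix.one_apply_eq]
  have hLq : (L *ᵥ q) ⬝ᵥ (L *ᵥ q) = lam i := by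
    rw [dot_mulVec_mulVec]
    have := diag_entry Q (Lᵀ * L) Q i
    rw [hdiag] at this
    rw [← this, Matrix.diagonal_apply_eq]
  have step1 : q ⬝ᵥ ((Wᵀ * L) *ᵥ q) = (W *ᵥ q) ⬝ᵥ (L *ᵥ q) := (dot_mulVec_mulVec W L q q).symm
  have hWq : Real.sqrt ((W *ᵥ q) ⬝ᵥ (W *ᵥ q)) ≤ 1 := by
    have := hW q
    rw [hqq] at this
    calc Real.sqrt ((W *ᵥ q) ⬝ᵥ (W *ᵥ q)) ≤ Real.sqrt 1 := Real.sqrt_le_sqrt this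
    _ = 1 := Real.sqrt_one
  calc q ⬝ᵥ ((Wᵀ * L) *ᵥ q) = (W *ᵥ q) ⬝ᵥ (L *ᵥ q) := step1
  _ ≤ Real.sqrt ((W *ᵥ q) ⬝ᵥ (W *ᵥ q)) * Real.sqrt ((L *ᵥ q) ⬝ᵥ (L *ᵥ q)) := dot_le_sqrt _ _
  _ ≤ 1 * Real.sqrt (lam i) := by
      rw [hLq]
      exact mul_le_of_le_one_left (Real.sqrt_nonneg _) hWq |>.trans (by rw [one_mul])
  _ = Real.sqrt (lam i) := one_mul _

end spectral

section attain
variable {a b : ℕ}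

lemma attain (L : Matrix (Fin a) (Fin b) ℝ) :
    ∃ W : Matrix (Fin a) (Fin b) ℝ,
      (∀ x, (W *ᵥ x) ⬝ᵥ (W *ᵥ x) ≤ x ⬝ᵥ x) ∧ (Wᵀ * L).trace = nuclearNorm L := by
  have hH : (Lᵀ * L).IsHermitian := by
    simpa [Matrix.conjTranspose_eq_transpose_of_trivial] using
      Matrix.isHermitian_conjTranspose_mul_self L
  set Q : Matrix (Fin b) (Fin b) ℝ := (hH.eigenvectorUnitary : Matrix (Fin b) (Fin b) ℝ) with hQ
  set lam : Fin b → ℝ := hH.eigenvalues with hlam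
  have h1 : Qᵀ * Q = 1 := by
    have := (hH.eigenvectorUnitary).2
    rw [Matrix.mem_unitaryGroup_iff'] at this
    simpa [Matrix.star_eq_conjTranspose, Matrix.conjTranspose_eq_transpose_of_trivial] using this
  have hcancel : ∀ M : Matrix (Fin b) (Fin b) ℝ, Qᵀ * (Q * M) = M := fun M => by
    rw [← Matrix.mul_assoc, h1, Matrix.one_mul]
  have hspec : Lᵀ * L = Q * Matrix.diagonal lam * Qᵀ := by
    rw [← Matrix.conjTranspose_eq_transpose_of_trivial L]
    have := hH.spectral_theorem
    simpa [Matrix.star_eq_conjTranspose, Matrix.conjTranspose_eq_transpose_of_trivial] using this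
  have hspec' : ∀ X : Matrix (Fin b) (Fin b) ℝ,
      Lᵀ * (L * X) = Q * (Matrix.diagonal lam * (Qᵀ * X)) := fun X => by
    rw [← Matrix.mul_assoc, hspec]; simp only [Matrix.mul_assoc]
  have hev : ∀ i, 0 ≤ lam i := fun i =>
    (Matrix.posSemidef_conjTranspose_mul_self L).eigenvalues_nonneg i
  set g : Fin b → ℝ := fun i => if lam i = 0 then 0 else (Real.sqrt (lam i))⁻¹ with hg
  have hsym : (Q * Matrix.diagonal g * Qᵀ)ᵀ = Q * Matrix.diagonal g * Qᵀ := by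
    rw [transpose_mul, transpose_mul, transpose_transpose, diagonal_transpose, Matrix.mul_assoc]
  refine ⟨L * (Q * Matrix.diagonal g * Qᵀ), ?_, ?_⟩
  · -- contraction
    intro x
    have hWtW : (L * (Q * Matrix.diagonal g * Qᵀ))ᵀ * (L * (Q * Matrix.diagonal g * Qᵀ))
        = Q * Matrix.diagonal (fun i => g i ^ 2 * lam i) * Qᵀ := by
      rw [transpose_mul, hsym]
      simp only [Matrix.mul_assoc]
      rw [hspec', hcancel, hcancel]
      have hd : Matrix.diagonal g * (Matrix.diagonal lam * (Matrix.diagonal g * Qᵀ))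
          = Matrix.diagonal (fun i => g i ^ 2 * lam i) * Qᵀ := by
        rw [← Matrix.mul_assoc, ← Matrix.mul_assoc, diagonal_mul_diagonal,
          diagonal_mul_diagonal]
        congr 1
        congr 1
        funext i; ring
      rw [hd]
    rw [dot_mulVec_mulVec, hWtW]
    apply quad_le Q h1
    intro i
    by_cases h : lam i = 0
    · simp [hg, h]
    · simp only [hg, if_neg h]
      rw [inv_pow, Real.sq_sqrt (hev i), inv_mul_cancel₀ h]
  · -- trace equals nuclear norm
    have htr : (L * (Q * Matrix.diagonal g * Qᵀ))ᵀ * L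
        = Q * (Matrix.diagonal (fun i => g i * lam i) * Qᵀ) := by
      rw [transpose_mul, hsym]
      simp only [Matrix.mul_assoc]
      rw [hspec]
      simp only [Matrix.mul_assoc]
      rw [hcancel, ← Matrix.mul_assoc (Matrix.diagonal g), diagonal_mul_diagonal]
    rw [htr, Matrix.trace_mul_comm, Matrix.mul_assoc, h1, Matrix.mul_one,
      Matrix.trace_diagonal, nuclearNorm]
    refine Finset.sum_congr rfl fun i _ => ?_
    by_cases h : lam i = 0
    · simp [hg, h, ← hlam]
    · simp only [hg, if_neg h, ← hlam]
      have hpos : 0 < lam i := (hev i).lt_of_ne (Ne.symm h)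
      have hs : Real.sqrt (lam i) ≠ 0 := ne_of_gt (Real.sqrt_pos.mpr hpos)
      field_simp
      exact (Real.sq_sqrt hpos.le).symm

end attain

section main

variable {m n r : ℕ}

/-- for `τ > 0` and `Z = U diag(σ) Vᵀ` an SVD of `Z`, the matrix
`S_τ(Z) = U diag((σ − τ)₊) Vᵀ` is the unique minimizer of
`L ↦ ‖L‖_* + (1/(2τ))‖L − Z‖_F²` (singular value shrinkage). -/
theorem singular_value_shrinkage_is_prox {m n r : ℕ} (τ : ℝ) (hτ : 0 < τ)
    (Z : Matrix (Fin m) (Fin n) ℝ)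
    (U : Matrix (Fin m) (Fin r) ℝ) (V : Matrix (Fin n) (Fin r) ℝ) (σ : Fin r → ℝ)
    (hU : U.transpose * U = 1) (hV : V.transpose * V = 1) (hσ : ∀ i, 0 ≤ σ i)
    (hZ : Z = U * Matrix.diagonal σ * V.transpose) :
    let Sτ : Matrix (Fin m) (Fin n) ℝ :=
      U * Matrix.diagonal (fun i => max (σ i - τ) 0) * V.transpose
    (∀ L : Matrix (Fin m) (Fin n) ℝ,
        nuclearNorm Sτ + (1/(2*τ)) * frobSq (Sτ - Z) ≤
          nuclearNorm L + (1/(2*τ)) * frobSq (L - Z)) ∧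
    (∀ L : Matrix (Fin m) (Fin n) ℝ,
        (∀ L' : Matrix (Fin m) (Fin n) ℝ,
          nuclearNorm L + (1/(2*τ)) * frobSq (L - Z) ≤
            nuclearNorm L' + (1/(2*τ)) * frobSq (L' - Z)) → L = Sτ) := by
  intro Sτ
  have hτ' : (τ:ℝ) ≠ 0 := ne_of_gt hτ
  set d : Fin r → ℝ := fun i => max (σ i - τ) 0 with hd
  have hSτ : Sτ = U * Matrix.diagonal d * Vᵀ := rfl
  have hdnn : ∀ i, 0 ≤ d i := fun i => le_max_right _ _
  set c : Fin r → ℝ := fun i => min (σ i) τ with hc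
  have hcnn : ∀ i, 0 ≤ c i := fun i => le_min (hσ i) hτ.le
  have hcle : ∀ i, c i ≤ τ := fun i => min_le_right _ _
  have hZS : Z - Sτ = U * Matrix.diagonal c * Vᵀ := by
    have hcd : ∀ i, (σ - d) i = c i := by
      intro i
      show σ i - d i = c i
      rcases le_total (σ i) τ with h | h
      · simp only [hd, hc]
        rw [max_eq_right (by linarith), min_eq_left h, sub_zero]
      · simp only [hd, hc]
        rw [max_eq_left (by linarith), min_eq_right h]
        ring
    rw [hZ, hSτ, ← Matrix.sub_mul, ← Matrix.mul_sub, Matrix.diagonal_sub]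
    have hfun : (fun i => σ i - d i) = c := by
      funext i
      exact hcd i
    rw [hfun]
  have hVdiag : ∀ j : Fin r, (Vᵀ * V) j j = 1 := fun j => by rw [hV, Matrix.one_apply_eq]
  -- nuclear norm of Sτ
  have hNS : nuclearNorm Sτ = ∑ j, d j := by
    apply le_antisymm
    · obtain ⟨W, hWc, hWtr⟩ := attain Sτ
      rw [← hWtr, hSτ]
      have e0 : Wᵀ * (U * Matrix.diagonal d * Vᵀ) = (Wᵀ * U * Matrix.diagonal d) * Vᵀ := by
        simp only [Matrix.mul_assoc]
      have e0' : Vᵀ * (Wᵀ * U * Matrix.diagonal d) = (Vᵀ * (Wᵀ * U)) * Matrix.diagonal d := by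
        simp only [Matrix.mul_assoc]
      rw [e0, Matrix.trace_mul_comm, e0', Matrix.trace]
      simp only [Matrix.diag_apply, Matrix.mul_diagonal]
      apply Finset.sum_le_sum
      intro j _
      have e2 : (Vᵀ * (Wᵀ * U)) j j = (fun k => V k j) ⬝ᵥ (Wᵀ *ᵥ fun k => U k j) := by
        rw [← Matrix.mul_assoc]
        exact diag_entry V Wᵀ U j
      have e3 : (fun k => V k j) ⬝ᵥ (Wᵀ *ᵥ fun k => U k j)
          = (W *ᵥ fun k => V k j) ⬝ᵥ (fun k => U k j) := by
        rw [dotProduct_mulVec, vecMul_transpose]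
      have huu : (fun k => U k j) ⬝ᵥ (fun k => U k j) = 1 := by
        have h4 := diag_entry U (1 : Matrix (Fin m) (Fin m) ℝ) U j
        rw [Matrix.mul_one, Matrix.one_mulVec] at h4
        rw [← h4, hU, Matrix.one_apply_eq]
      have hvv : (fun k => V k j) ⬝ᵥ (fun k => V k j) = 1 := by
        have h4 := diag_entry V (1 : Matrix (Fin n) (Fin n) ℝ) V j
        rw [Matrix.mul_one, Matrix.one_mulVec] at h4
        rw [← h4, hV, Matrix.one_apply_eq]
      have hb : (Vᵀ * (Wᵀ * U)) j j ≤ 1 := by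
        rw [e2, e3]
        calc (W *ᵥ fun k => V k j) ⬝ᵥ (fun k => U k j)
            ≤ Real.sqrt ((W *ᵥ fun k => V k j) ⬝ᵥ (W *ᵥ fun k => V k j))
              * Real.sqrt ((fun k => U k j) ⬝ᵥ (fun k => U k j)) := dot_le_sqrt _ _
        _ ≤ 1 * 1 := by
            apply mul_le_mul
            · calc Real.sqrt ((W *ᵥ fun k => V k j) ⬝ᵥ (W *ᵥ fun k => V k j))
                  ≤ Real.sqrt ((fun k => V k j) ⬝ᵥ (fun k => V k j)) :=
                    Real.sqrt_le_sqrt (hWc _)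
              _ = 1 := by rw [hvv, Real.sqrt_one]
            · rw [huu, Real.sqrt_one]
            · exact Real.sqrt_nonneg _
            · exact zero_le_one
        _ = 1 := by ring
      exact mul_le_of_le_one_left (hdnn j) hb
    · set e : Fin r → ℝ := fun j => if d j = 0 then 0 else 1 with he
      have hecontr : ∀ x, ((U * Matrix.diagonal e * Vᵀ) *ᵥ x) ⬝ᵥ ((U * Matrix.diagonal e * Vᵀ) *ᵥ x) ≤ x ⬝ᵥ x := by
        intro x
        apply opbound U V e hU hV
        intro i
        by_cases h : d i = 0 <;> simp [he, h]
      have := dual_le Sτ (U * Matrix.diagonal e * Vᵀ) hecontr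
      rw [hSτ, trace_UDVt_mul U V hU e d] at this
      calc ∑ j, d j = ∑ j, e j * d j * (Vᵀ * V) j j := by
            refine Finset.sum_congr rfl fun j _ => ?_
            rw [hVdiag j, mul_one]
            by_cases h : d j = 0 <;> simp [he, h]
      _ ≤ nuclearNorm (U * Matrix.diagonal d * Vᵀ) := this
      _ = nuclearNorm Sτ := by rw [← hSτ]
  -- subgradient inequality
  set w : Fin r → ℝ := fun j => c j / τ with hw
  have hW0 : U * Matrix.diagonal w * Vᵀ = (1/τ) • (Z - Sτ) := by
    rw [hZS]
    have hwc : w = (1/τ) • c := by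
      funext j
      simp [hw, Pi.smul_apply, div_eq_inv_mul, smul_eq_mul]
    rw [hwc, Matrix.diagonal_smul, Matrix.mul_smul, Matrix.smul_mul]
  have hmain : ∀ L : Matrix (Fin m) (Fin n) ℝ,
      nuclearNorm Sτ + (1/τ) * ((Z - Sτ)ᵀ * (L - Sτ)).trace ≤ nuclearNorm L := by
    intro L
    have hcontr : ∀ x, ((U * Matrix.diagonal w * Vᵀ) *ᵥ x) ⬝ᵥ ((U * Matrix.diagonal w * Vᵀ) *ᵥ x) ≤ x ⬝ᵥ x := by
      intro x
      apply opbound U V w hU hV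
      intro i
      have h0 : 0 ≤ w i := div_nonneg (hcnn i) hτ.le
      have h1 : w i ≤ 1 := by
        rw [hw, div_le_one hτ]
        exact hcle i
      calc w i ^ 2 ≤ 1 ^ 2 := pow_le_pow_left₀ h0 h1 2
      _ = 1 := one_pow 2
    have hdual := dual_le L (U * Matrix.diagonal w * Vᵀ) hcontr
    have hsplit : ((U * Matrix.diagonal w * Vᵀ)ᵀ * L).trace
        = ((U * Matrix.diagonal w * Vᵀ)ᵀ * (L - Sτ)).trace
          + ((U * Matrix.diagonal w * Vᵀ)ᵀ * Sτ).trace := by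
      rw [← Matrix.trace_add, ← Matrix.mul_add, sub_add_cancel]
    have hts : ((U * Matrix.diagonal w * Vᵀ)ᵀ * Sτ).trace = nuclearNorm Sτ := by
      rw [hSτ, trace_UDVt_mul U V hU w d, hNS]
      refine Finset.sum_congr rfl fun j _ => ?_
      rw [hVdiag j, mul_one]
      rcases le_total (σ j) τ with h | h
      · have hdj : d j = 0 := by rw [hd]; exact max_eq_right (by linarith)
        rw [hdj, mul_zero]
      · have hcj : c j = τ := by rw [hc]; exact min_eq_right h
        rw [hw]
        simp only [hcj]
        rw [div_self hτ', one_mul]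
    have htd : ((U * Matrix.diagonal w * Vᵀ)ᵀ * (L - Sτ)).trace
        = (1/τ) * ((Z - Sτ)ᵀ * (L - Sτ)).trace := by
      rw [hW0, Matrix.transpose_smul, Matrix.smul_mul, Matrix.trace_smul, smul_eq_mul]
    rw [hsplit, hts, htd] at hdual
    linarith
  -- strengthened first inequality
  have hstrong : ∀ L : Matrix (Fin m) (Fin n) ℝ,
      nuclearNorm Sτ + (1/(2*τ)) * frobSq (Sτ - Z) + (1/(2*τ)) * frobSq (L - Sτ) ≤
        nuclearNorm L + (1/(2*τ)) * frobSq (L - Z) := by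
    intro L
    have hexp : frobSq (L - Z)
        = frobSq (L - Sτ) + 2 * ((L - Sτ)ᵀ * (Sτ - Z)).trace + frobSq (Sτ - Z) := by
      rw [← sub_add_sub_cancel L Sτ Z]
      exact frobSq_add (L - Sτ) (Sτ - Z)
    have htr : ((Z - Sτ)ᵀ * (L - Sτ)).trace = -((L - Sτ)ᵀ * (Sτ - Z)).trace := by
      rw [← Matrix.trace_transpose ((Z - Sτ)ᵀ * (L - Sτ)), Matrix.transpose_mul,
        Matrix.transpose_transpose]
      rw [show (Z - Sτ) = -(Sτ - Z) from (neg_sub _ _).symm, Matrix.mul_neg,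
        Matrix.trace_neg]
    have h2 := hmain L
    rw [htr] at h2
    rw [hexp]
    have hk : 1/τ = 2 * (1/(2*τ)) := by field_simp
    rw [hk] at h2
    set T := ((L - Sτ)ᵀ * (Sτ - Z)).trace
    set k := 1/(2*τ)
    nlinarith [h2]
  constructor
  · intro L
    have := hstrong L
    have hnn := frobSq_nonneg (L - Sτ)
    have hkpos : 0 < 1/(2*τ) := by positivity
    nlinarith
  · intro L hLmin
    have h1 := hLmin Sτ
    have h2 := hstrong L
    have hkpos : 0 < 1/(2*τ) := by positivity
    have hF : frobSq (L - Sτ) ≤ 0 := by nlinarith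
    have hF0 : frobSq (L - Sτ) = 0 := le_antisymm hF (frobSq_nonneg _)
    have hall : ∀ i j, (L - Sτ) i j = 0 := by
      intro i j
      have hrow : ∀ i ∈ Finset.univ, (0:ℝ) ≤ ∑ j, ((L - Sτ) i j)^2 :=
        fun i _ => Finset.sum_nonneg fun j _ => sq_nonneg _
      have h5 : ∑ j, ((L - Sτ) i j)^2 = 0 := by
        have := (Finset.sum_eq_zero_iff_of_nonneg hrow).mp hF0 i (Finset.mem_univ i)
        exact this
      have h6 := (Finset.sum_eq_zero_iff_of_nonneg
        (fun j _ => sq_nonneg ((L - Sτ) i j))).mp h5 j (Finset.mem_univ j)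
      exact pow_eq_zero_iff (by norm_num) |>.mp h6
    ext i j
    have := hall i j
    rwa [Matrix.sub_apply, sub_eq_zero] at this

end main
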